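/- Let uv be an edge of a network G and g a point of G. Then the set of points p on uv such that g is a farthest point from p (i.e., d(p,g)=ecc(p)) is a (possibly empty) subinterval of uv. -/

import Mathlib

open Set

/-- A finite simple undirected network on `n` vertices with positive edge weights. -/
structure WGraph (n : ℕ) where
  adj : Fin n → Fin n → Bool
  symm : ∀ u v, adj u v = adj v u
  loopless : ∀ u, adj u u = false
  w : Fin n → Fin n → ℝ
  wsymm : ∀ u v, w u v = w v u
  wpos : ∀ u v, adj u v = true → 0 < w u v

variable {n : ℕ}

def WGraph.toSimple (G : WGraph n) : SimpleGraph (Fin n) where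
  Adj u v := G.adj u v = true
  symm := ⟨fun u v h => by
    have h' : G.adj u v = true := h
    show G.adj v u = true
    rw [G.symm]; exact h'⟩
  loopless := ⟨fun u h => by
    have h' : G.adj u u = true := h
    simp [G.loopless u] at h'⟩

instance (G : WGraph n) : DecidableRel G.toSimple.Adj :=
  fun u v => inferInstanceAs (Decidable (G.adj u v = true))

/-- Total weight of a walk. -/
noncomputable def WGraph.walkWeight (G : WGraph n) {u v : Fin n}
    (p : G.toSimple.Walk u v) : ℝ :=
  (p.darts.map fun d => G.w d.toProd.1 d.toProd.2).sum

/-- Weighted shortest-path distance between vertices. -/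
noncomputable def WGraph.vdist (G : WGraph n) (u v : Fin n) : ℝ :=
  sInf {x | ∃ p : G.toSimple.Walk u v, x = G.walkWeight p}

/-- Network distance between the point at parameter `a` on edge `uv` and the point at
parameter `b` on edge `st`: the minimum over routes through the endpoints, together with
the direct route along the edge when the two edges coincide. -/
noncomputable def WGraph.pdist (G : WGraph n) (u v : Fin n) (a : ℝ) (s t : Fin n) (b : ℝ) : ℝ :=
  let base := min
    (min (a * G.w u v + G.vdist u s + b * G.w s t)
         (a * G.w u v + G.vdist u t + (1 - b) * G.w s t))
    (min ((1 - a) * G.w u v + G.vdist v s + b * G.w s t)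
         ((1 - a) * G.w u v + G.vdist v t + (1 - b) * G.w s t))
  if u = s ∧ v = t then min (|a - b| * G.w u v) base
  else if u = t ∧ v = s then min (|a - (1 - b)| * G.w u v) base
  else base

/-- Eccentricity of the point at parameter `a` on edge `uv`: the largest network distance
to any point of the network. -/
noncomputable def WGraph.eccOn (G : WGraph n) (u v : Fin n) (a : ℝ) : ℝ :=
  sSup {x | ∃ s t, G.adj s t = true ∧ ∃ b ∈ Icc (0:ℝ) 1, x = G.pdist u v a s t b}

/-- A point of the network: an (oriented) edge together with a parameter in `[0,1]`. -/
abbrev NetPt (n : ℕ) := (Fin n × Fin n) × ℝ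

def WGraph.validPt (G : WGraph n) (p : NetPt n) : Prop :=
  G.adj p.1.1 p.1.2 = true ∧ p.2 ∈ Icc (0:ℝ) 1

noncomputable def WGraph.pdistPt (G : WGraph n) (p q : NetPt n) : ℝ :=
  G.pdist p.1.1 p.1.2 p.2 q.1.1 q.1.2 q.2

noncomputable def WGraph.eccPt (G : WGraph n) (p : NetPt n) : ℝ :=
  G.eccOn p.1.1 p.1.2 p.2

/-- `f` is piecewise affine on `[0,1]` with at most `N` pieces. -/
def PWAffine (f : ℝ → ℝ) (N : ℕ) : Prop :=
  ∃ t : Fin (N + 1) → ℝ, Monotone t ∧ t 0 = 0 ∧ t (Fin.last N) = 1 ∧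
    ∀ i : Fin N, ∃ a b : ℝ, ∀ x ∈ Icc (t i.castSucc) (t i.succ), f x = a * x + b

namespace WGraph

theorem walkWeight_nonneg (G : WGraph n) {u v : Fin n} (p : G.toSimple.Walk u v) :
    0 ≤ G.walkWeight p := by
  apply List.sum_nonneg
  intro x hx
  simp only [List.mem_map] at hx
  obtain ⟨d, _, rfl⟩ := hx
  exact (G.wpos _ _ d.adj).le

theorem vdist_nonneg (G : WGraph n) (u v : Fin n) : 0 ≤ G.vdist u v :=
  Real.sInf_nonneg fun x hx => by obtain ⟨p, rfl⟩ := hx; exact G.walkWeight_nonneg p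

theorem vdist_pos (G : WGraph n) (hconn : G.toSimple.Connected) {u v : Fin n}
    (hne : u ≠ v) {a b : Fin n} (hab : G.adj a b = true) : 0 < G.vdist u v := by
  classical
  have hFne : (Finset.univ.filter (fun p : Fin n × Fin n => G.adj p.1 p.2 = true)).Nonempty :=
    ⟨(a, b), by simp [hab]⟩
  set c : ℝ := Finset.inf' _ hFne (fun p : Fin n × Fin n => G.w p.1 p.2) with hc
  have hcpos : 0 < c := by
    rw [hc, Finset.lt_inf'_iff]
    intro p hp
    exact G.wpos _ _ (by simpa using hp)
  have hne' : Set.Nonempty {x | ∃ p : G.toSimple.Walk u v, x = G.walkWeight p} := by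
    obtain ⟨p⟩ := hconn.preconnected u v
    exact ⟨_, p, rfl⟩
  have hwalk : ∀ x ∈ {x | ∃ p : G.toSimple.Walk u v, x = G.walkWeight p}, c ≤ x := by
    rintro x ⟨p, rfl⟩
    cases p with
    | nil => exact absurd rfl hne
    | cons h q =>
      rename_i m
      have heq : G.walkWeight (SimpleGraph.Walk.cons h q) = G.w u m + G.walkWeight q := by
        simp [WGraph.walkWeight, SimpleGraph.Walk.darts_cons]
      rw [heq]
      have h1 : c ≤ G.w u m := by
        have hm : ((u, m) : Fin n × Fin n) ∈
            Finset.univ.filter (fun p : Fin n × Fin n => G.adj p.1 p.2 = true) := by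
          simp only [Finset.mem_filter, Finset.mem_univ, true_and]
          exact h
        exact Finset.inf'_le _ hm
      have h2 := G.walkWeight_nonneg q
      linarith
  exact lt_of_lt_of_le hcpos (le_csInf hne' hwalk)

theorem pdist_ge_of (G : WGraph n) (u v s t : Fin n) (a b r : ℝ)
    (h1 : r ≤ a * G.w u v + G.vdist u s + b * G.w s t)
    (h2 : r ≤ a * G.w u v + G.vdist u t + (1 - b) * G.w s t)
    (h3 : r ≤ (1 - a) * G.w u v + G.vdist v s + b * G.w s t)
    (h4 : r ≤ (1 - a) * G.w u v + G.vdist v t + (1 - b) * G.w s t)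
    (h0A : u = s → v = t → r ≤ |a - b| * G.w u v)
    (h0B : u = t → v = s → r ≤ |a - (1 - b)| * G.w u v) :
    r ≤ G.pdist u v a s t b := by
  simp only [WGraph.pdist]
  split_ifs with hA hB
  · exact le_min (h0A hA.1 hA.2) (le_min (le_min h1 h2) (le_min h3 h4))
  · exact le_min (h0B hB.1 hB.2) (le_min (le_min h1 h2) (le_min h3 h4))
  · exact le_min (le_min h1 h2) (le_min h3 h4)

theorem pdist_le_t1 (G : WGraph n) (u v s t : Fin n) (a b : ℝ) :
    G.pdist u v a s t b ≤ a * G.w u v + G.vdist u s + b * G.w s t := by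
  simp only [WGraph.pdist]
  split_ifs <;>
    first
    | exact (min_le_right _ _).trans ((min_le_left _ _).trans (min_le_left _ _))
    | exact (min_le_left _ _).trans (min_le_left _ _)

theorem pdist_le_t2 (G : WGraph n) (u v s t : Fin n) (a b : ℝ) :
    G.pdist u v a s t b ≤ a * G.w u v + G.vdist u t + (1 - b) * G.w s t := by
  simp only [WGraph.pdist]
  split_ifs <;>
    first
    | exact (min_le_right _ _).trans ((min_le_left _ _).trans (min_le_right _ _))
    | exact (min_le_left _ _).trans (min_le_right _ _)

theorem pdist_le_t3 (G : WGraph n) (u v s t : Fin n) (a b : ℝ) :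
    G.pdist u v a s t b ≤ (1 - a) * G.w u v + G.vdist v s + b * G.w s t := by
  simp only [WGraph.pdist]
  split_ifs <;>
    first
    | exact (min_le_right _ _).trans ((min_le_right _ _).trans (min_le_left _ _))
    | exact (min_le_right _ _).trans (min_le_left _ _)

theorem pdist_le_t4 (G : WGraph n) (u v s t : Fin n) (a b : ℝ) :
    G.pdist u v a s t b ≤ (1 - a) * G.w u v + G.vdist v t + (1 - b) * G.w s t := by
  simp only [WGraph.pdist]
  split_ifs <;>
    first
    | exact (min_le_right _ _).trans ((min_le_right _ _).trans (min_le_right _ _))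
    | exact (min_le_right _ _).trans (min_le_right _ _)

theorem pdist_le_dir1 (G : WGraph n) {u v s t : Fin n} (h1 : u = s) (h2 : v = t) (a b : ℝ) :
    G.pdist u v a s t b ≤ |a - b| * G.w u v := by
  simp only [WGraph.pdist, if_pos (⟨h1, h2⟩ : u = s ∧ v = t)]
  exact min_le_left _ _

theorem pdist_le_dir2 (G : WGraph n) {u v s t : Fin n} (h : ¬(u = s ∧ v = t))
    (h1 : u = t) (h2 : v = s) (a b : ℝ) :
    G.pdist u v a s t b ≤ |a - (1 - b)| * G.w u v := by
  simp only [WGraph.pdist, if_neg h, if_pos (⟨h1, h2⟩ : u = t ∧ v = s)]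
  exact min_le_left _ _

theorem pdist_lip (G : WGraph n) (u v s t : Fin n) (huv : G.adj u v = true) (a b c : ℝ) :
    G.pdist u v a s t c ≤ G.pdist u v b s t c + |a - b| * G.w u v := by
  have hw : 0 ≤ G.w u v := (G.wpos _ _ huv).le
  have h1 : (a - b) * G.w u v ≤ |a - b| * G.w u v :=
    mul_le_mul_of_nonneg_right (le_abs_self _) hw
  have h2 : (b - a) * G.w u v ≤ |a - b| * G.w u v :=
    mul_le_mul_of_nonneg_right (by rw [abs_sub_comm]; exact le_abs_self _) hw
  have h3 : |a - c| * G.w u v ≤ |b - c| * G.w u v + |a - b| * G.w u v := by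
    have := mul_le_mul_of_nonneg_right (abs_sub_le a b c) hw
    nlinarith
  have h4 : |a - (1 - c)| * G.w u v ≤ |b - (1 - c)| * G.w u v + |a - b| * G.w u v := by
    have := mul_le_mul_of_nonneg_right (abs_sub_le a b (1 - c)) hw
    nlinarith
  have hmm : ∀ p q k : ℝ, min p q + k = min (p + k) (q + k) := fun p q k => by
    rcases le_total p q with h | h
    · rw [min_eq_left h, min_eq_left (by linarith)]
    · rw [min_eq_right h, min_eq_right (by linarith)]
  simp only [WGraph.pdist]
  split_ifs with hA hB
  · rw [hmm, hmm, hmm, hmm]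
    exact min_le_min (by linarith) (min_le_min
      (min_le_min (by linarith) (by linarith)) (min_le_min (by linarith) (by linarith)))
  · rw [hmm, hmm, hmm, hmm]
    exact min_le_min (by linarith) (min_le_min
      (min_le_min (by linarith) (by linarith)) (min_le_min (by linarith) (by linarith)))
  · rw [hmm, hmm, hmm]
    exact min_le_min
      (min_le_min (by linarith) (by linarith)) (min_le_min (by linarith) (by linarith))

theorem bddAbove_eccSet (G : WGraph n) (u v : Fin n) (lam : ℝ) :
    BddAbove {x | ∃ s t, G.adj s t = true ∧ ∃ b ∈ Icc (0:ℝ) 1, x = G.pdist u v lam s t b} := by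
  have hne : Nonempty (Fin n × Fin n) := ⟨(u, u)⟩
  refine ⟨lam * G.w u v + Finset.univ.sup' Finset.univ_nonempty
    (fun p : Fin n × Fin n => G.vdist u p.1 + G.w p.1 p.2), ?_⟩
  rintro x ⟨s, t, hst, b, hb, rfl⟩
  have h1 := G.pdist_le_t1 u v s t lam b
  have h2 : G.vdist u s + G.w s t ≤ Finset.univ.sup' Finset.univ_nonempty
      (fun p : Fin n × Fin n => G.vdist u p.1 + G.w p.1 p.2) :=
    by exact Finset.le_sup' (fun p : Fin n × Fin n => G.vdist u p.1 + G.w p.1 p.2) (Finset.mem_univ (s, t))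
  have h3 : 0 < G.w s t := G.wpos _ _ hst
  have h4 : b * G.w s t ≤ G.w s t := by nlinarith [hb.1, hb.2]
  linarith

theorem pdist_le_eccOn (G : WGraph n) (u v s t : Fin n) (hst : G.adj s t = true)
    (lam b : ℝ) (hb : b ∈ Icc (0:ℝ) 1) :
    G.pdist u v lam s t b ≤ G.eccOn u v lam := by
  simp only [WGraph.eccOn]
  exact le_csSup (G.bddAbove_eccSet u v lam) ⟨s, t, hst, b, hb, rfl⟩

set_option maxHeartbeats 1000000 in
theorem contra_block (G : WGraph n) (hconn : G.toSimple.Connected) {u v : Fin n}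
    (huv : G.adj u v = true) (x z m : ℝ) (hx0 : 0 ≤ x) (hxz : x ≤ z) (hz1 : z ≤ 1)
    (hm0 : 0 < m) (hm1 : m < 1)
    (hEx : G.eccOn u v x ≤ (m - x) * G.w u v)
    (hEz : G.eccOn u v z ≤ (z - m) * G.w u v) : False := by
  have hw : 0 < G.w u v := G.wpos _ _ huv
  have hne : u ≠ v := fun h => by rw [h, G.loopless] at huv; simp at huv
  set w := G.w u v with hwdef
  set D := min (G.vdist u v) (G.vdist v u) with hD
  have hD1 : D ≤ G.vdist u v := min_le_left _ _
  have hD2 : D ≤ G.vdist v u := min_le_right _ _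
  have hDpos : 0 < D := lt_min (G.vdist_pos hconn hne huv) (G.vdist_pos hconn hne.symm huv)
  have huu : 0 ≤ G.vdist u u := G.vdist_nonneg u u
  have hvv : 0 ≤ G.vdist v v := G.vdist_nonneg v v
  have huvn : 0 ≤ G.vdist u v := G.vdist_nonneg u v
  have hvun : 0 ≤ G.vdist v u := G.vdist_nonneg v u
  set c : ℝ := (w + D) / (2 * w) with hc
  have hc0 : 0 < c := by positivity
  have hcw : c * w = (w + D) / 2 := by rw [hc]; field_simp
  have hx1 : x ≤ 1 := hxz.trans hz1
  have hz0 : 0 ≤ z := hx0.trans hxz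
  have hxw : 0 ≤ x * w := mul_nonneg hx0 hw.le
  have hzw1 : 0 ≤ (1 - z) * w := mul_nonneg (by linarith) hw.le
  -- x side: (w+D)/2 ≤ (m-x)*w
  have hxside : (w + D) / 2 ≤ (m - x) * w := by
    by_cases hbx : x + c ≤ 1
    · have hmem : x + c ∈ Icc (0:ℝ) 1 := ⟨by linarith, hbx⟩
      have hlb : (w + D) / 2 ≤ G.pdist u v x u v (x + c) := by
        apply G.pdist_ge_of
        · linarith [hcw, huu, hxw]
        · linarith [hcw, hD1]
        · linarith [hcw, hvun, hw]
        · linarith [hcw, hvv,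
            mul_le_mul_of_nonneg_right (show c ≤ 1 - x by linarith) hw.le]
        · intro _ _
          rw [show x - (x + c) = -c by ring, abs_neg, abs_of_pos hc0, hcw]
        · intro h _
          exact absurd h hne
      exact (hlb.trans ((G.pdist_le_eccOn u v u v huv x (x + c) hmem).trans hEx))
    · exfalso
      have hmem : (1:ℝ) ∈ Icc (0:ℝ) 1 := ⟨zero_le_one, le_refl 1⟩
      have hlb : min ((1 - x) * w) (x * w + D) ≤ G.pdist u v x u v 1 := by
        apply G.pdist_ge_of
        · linarith [min_le_left ((1 - x) * w) (x * w + D), huu, hxw]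
        · linarith [min_le_right ((1 - x) * w) (x * w + D), hD1]
        · linarith [min_le_left ((1 - x) * w) (x * w + D), hvun, hw]
        · linarith [min_le_left ((1 - x) * w) (x * w + D), hvv]
        · intro _ _
          rw [show |x - (1:ℝ)| = 1 - x by rw [abs_of_nonpos (by linarith)]; ring]
          exact min_le_left _ _
        · intro h _
          exact absurd h hne
      have hch : min ((1 - x) * w) (x * w + D) ≤ (m - x) * w :=
        hlb.trans ((G.pdist_le_eccOn u v u v huv x 1 hmem).trans hEx)
      rcases min_le_iff.mp hch with h | h
      · linarith [mul_pos (show (0:ℝ) < 1 - m by linarith) hw]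
      · push_neg at hbx
        have hlt : (1 - x) * w < c * w := mul_lt_mul_of_pos_right (by linarith) hw
        rw [hcw] at hlt
        linarith [mul_pos (show (0:ℝ) < 1 - m by linarith) hw]
  -- z side: (w+D)/2 ≤ (z-m)*w
  have hzside : (w + D) / 2 ≤ (z - m) * w := by
    by_cases hbz : 0 ≤ z - c
    · have hmem : z - c ∈ Icc (0:ℝ) 1 := ⟨hbz, by linarith⟩
      have hzcw : c * w ≤ z * w := mul_le_mul_of_nonneg_right (by linarith) hw.le
      have hlb : (w + D) / 2 ≤ G.pdist u v z u v (z - c) := by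
        apply G.pdist_ge_of
        · linarith [hcw, huu, hzcw]
        · linarith [hcw, huvn, hw]
        · linarith [hcw, hD2]
        · linarith [hcw, hvv, hzw1]
        · intro _ _
          rw [show z - (z - c) = c by ring, abs_of_pos hc0, hcw]
        · intro h _
          exact absurd h hne
      exact (hlb.trans ((G.pdist_le_eccOn u v u v huv z (z - c) hmem).trans hEz))
    · exfalso
      have hmem : (0:ℝ) ∈ Icc (0:ℝ) 1 := ⟨le_refl 0, zero_le_one⟩
      have hlb : min (z * w) ((1 - z) * w + D) ≤ G.pdist u v z u v 0 := by
        apply G.pdist_ge_of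
        · linarith [min_le_left (z * w) ((1 - z) * w + D), huu]
        · linarith [min_le_left (z * w) ((1 - z) * w + D), huvn, hw]
        · linarith [min_le_right (z * w) ((1 - z) * w + D), hD2]
        · linarith [min_le_left (z * w) ((1 - z) * w + D), hvv, hzw1]
        · intro _ _
          rw [show |z - (0:ℝ)| = z by rw [sub_zero, abs_of_nonneg hz0]]
          exact min_le_left _ _
        · intro h _
          exact absurd h hne
      have hch : min (z * w) ((1 - z) * w + D) ≤ (z - m) * w :=
        hlb.trans ((G.pdist_le_eccOn u v u v huv z 0 hmem).trans hEz)
      rcases min_le_iff.mp hch with h | h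
      · linarith [mul_pos hm0 hw]
      · push_neg at hbz
        have hlt : z * w < c * w := mul_lt_mul_of_pos_right (by linarith) hw
        rw [hcw] at hlt
        linarith [mul_pos hm0 hw]
  linarith [mul_le_mul_of_nonneg_right (show z - x ≤ 1 by linarith) hw.le, hDpos]

end WGraph

set_option maxHeartbeats 1000000 in
/-- Lemma 8: the set of points on an edge `uv` having the fixed point `g` (the point at
parameter `mu` on edge `st`) as a farthest point is a (possibly empty) subinterval of
`uv`. -/
theorem farthest_point_set_on_edge_is_interval (n : ℕ) (G : WGraph n)
    (hconn : G.toSimple.Connected) (u v s t : Fin n)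
    (huv : G.adj u v = true) (hst : G.adj s t = true) (mu : ℝ) (hmu : mu ∈ Icc (0:ℝ) 1) :
    ({lam | lam ∈ Icc (0:ℝ) 1 ∧ G.pdist u v lam s t mu = G.eccOn u v lam}).OrdConnected := by
  constructor
  rintro x ⟨hx01, hxE⟩ z ⟨hz01, hzE⟩ y ⟨hxy, hyz⟩
  have hy01 : y ∈ Icc (0:ℝ) 1 := ⟨hx01.1.trans hxy, hyz.trans hz01.2⟩
  refine ⟨hy01, ?_⟩
  have hw : 0 < G.w u v := G.wpos _ _ huv
  apply le_antisymm (G.pdist_le_eccOn u v s t hst y mu hmu)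
  have hnonempty : Set.Nonempty
      {e | ∃ s' t', G.adj s' t' = true ∧ ∃ b ∈ Icc (0:ℝ) 1, e = G.pdist u v y s' t' b} :=
    ⟨_, s, t, hst, mu, hmu, rfl⟩
  simp only [WGraph.eccOn]
  apply csSup_le hnonempty
  rintro e ⟨s', t', hst', b', hb', rfl⟩
  -- lipschitz facts
  have l2x := G.pdist_le_eccOn u v s' t' hst' x b' hb'
  have l2z := G.pdist_le_eccOn u v s' t' hst' z b' hb'
  rw [← hxE] at l2x
  rw [← hzE] at l2z
  have lipx := G.pdist_lip u v s' t' huv y x b'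
  have lipz := G.pdist_lip u v s' t' huv y z b'
  rw [abs_of_nonneg (by linarith : (0:ℝ) ≤ y - x)] at lipx
  rw [abs_of_nonpos (by linarith : y - z ≤ 0)] at lipz
  -- the direct-term bound
  have hdirect : ∀ m : ℝ, 0 ≤ m → m ≤ 1 →
      G.pdist u v x s t mu ≤ |x - m| * G.w u v →
      G.pdist u v z s t mu ≤ |z - m| * G.w u v →
      G.pdist u v y s' t' b' ≤ |y - m| * G.w u v := by
    intro m hm0 hm1 hfx hfz
    rcases le_total m y with hmy | hym
    · -- m ≤ y : farthest point to the left or contradiction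
      rcases le_or_gt m x with hmx | hxm
      · rw [abs_of_nonneg (by linarith : (0:ℝ) ≤ x - m)] at hfx
        rw [abs_of_nonneg (by linarith : (0:ℝ) ≤ y - m)]
        nlinarith [lipx, l2x, hfx, hw]
      · by_cases hmtop : 1 ≤ m
        · have hyz' : y = z := le_antisymm hyz (by linarith [hz01.2])
          rw [hyz']
          exact l2z.trans hfz
        · exfalso
          apply G.contra_block hconn huv x z m hx01.1 (hxy.trans hyz) hz01.2
            (by linarith [hx01.1]) (lt_of_not_ge hmtop)
          · rw [← hxE]
            rw [abs_of_nonpos (by linarith : x - m ≤ 0)] at hfx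
            linarith
          · rw [← hzE]
            rw [abs_of_nonneg (by linarith : (0:ℝ) ≤ z - m)] at hfz
            linarith
    · -- y ≤ m
      rcases le_or_gt z m with hzm | hmz
      · rw [abs_of_nonpos (by linarith : z - m ≤ 0)] at hfz
        rw [abs_of_nonpos (by linarith : y - m ≤ 0)]
        nlinarith [lipz, l2z, hfz, hw]
      · by_cases hmbot : m ≤ 0
        · have hxy' : y = x := le_antisymm (by linarith [hx01.1]) hxy
          rw [hxy']
          exact l2x.trans hfx
        · exfalso
          apply G.contra_block hconn huv x z m hx01.1 (hxy.trans hyz) hz01.2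
            (lt_of_not_ge hmbot) (by linarith [hz01.2])
          · rw [← hxE]
            rw [abs_of_nonpos (by linarith : x - m ≤ 0)] at hfx
            linarith
          · rw [← hzE]
            rw [abs_of_nonneg (by linarith : (0:ℝ) ≤ z - m)] at hfz
            linarith
  apply G.pdist_ge_of
  · have hC := G.pdist_le_t1 u v s t x mu
    linarith [lipx, l2x]
  · have hC := G.pdist_le_t2 u v s t x mu
    linarith [lipx, l2x]
  · have hC := G.pdist_le_t3 u v s t z mu
    linarith [lipz, l2z]
  · have hC := G.pdist_le_t4 u v s t z mu
    linarith [lipz, l2z]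
  · intro h1 h2
    exact hdirect mu hmu.1 hmu.2 (G.pdist_le_dir1 h1 h2 x mu) (G.pdist_le_dir1 h1 h2 z mu)
  · intro h1 h2
    by_cases hA : u = s ∧ v = t
    · -- degenerate: then u = t = v, impossible
      exfalso
      have huvd : u = v := h1.trans hA.2.symm
      rw [huvd, G.loopless] at huv
      simp at huv
    · exact hdirect (1 - mu) (by linarith [hmu.2]) (by linarith [hmu.1])
        (G.pdist_le_dir2 hA h1 h2 x mu) (G.pdist_le_dir2 hA h1 h2 z mu)
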